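/- Let u: [1,∞) → ℝ be continuous and satisfy u(r) + (1/((n-1)r))(∫₁^r u(t) dt)² ≤ C for all r ≥ 1, where C > 0. Then ∫₁^r u(t) dt ≤ √((n-1)Cr) for all r ≥ 1. -/

import Mathlib

/-- Let `u : [1,∞) → ℝ` be continuous and satisfy
`u(r) + (1/((n-1)r)) (∫₁^r u(t) dt)² ≤ C` for all `r ≥ 1`, where `C > 0`.  Then
`∫₁^r u(t) dt ≤ √((n-1) C r)` for all `r ≥ 1`. -/
theorem riccati_integral_comparison
    (n : ℕ) (hn : 2 ≤ n) (C : ℝ) (hC : 0 < C)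
    (u : ℝ → ℝ) (hu : ContinuousOn u (Set.Ici 1))
    (hineq : ∀ r : ℝ, 1 ≤ r →
      u r + (1 / (((n : ℝ) - 1) * r)) * (∫ t in (1:ℝ)..r, u t) ^ 2 ≤ C) :
    ∀ r : ℝ, 1 ≤ r →
      (∫ t in (1:ℝ)..r, u t) ≤ Real.sqrt (((n : ℝ) - 1) * C * r) := by
  have hn1 : (0:ℝ) < (n : ℝ) - 1 := by
    have : (2:ℝ) ≤ (n:ℝ) := by exact_mod_cast hn
    linarith
  intro r₀ hr₀
  by_contra hcon
  push_neg at hcon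
  set F : ℝ → ℝ := fun x => ∫ t in (1:ℝ)..x, u t with hF
  set g : ℝ → ℝ := fun x => F x - Real.sqrt (((n : ℝ) - 1) * C * x) with hg
  -- integrability
  have hint : MeasureTheory.IntegrableOn u (Set.uIcc 1 r₀) := by
    apply (hu.mono ?_).integrableOn_compact isCompact_uIcc
    rw [Set.uIcc_of_le hr₀]
    exact fun x hx => hx.1
  -- continuity of F on [1, r₀]
  have hFcont : ContinuousOn F (Set.Icc 1 r₀) := by
    have := intervalIntegral.continuousOn_primitive_interval hint
    rwa [Set.uIcc_of_le hr₀] at this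
  have hgcont : ContinuousOn g (Set.Icc 1 r₀) := by
    apply hFcont.sub
    exact (Real.continuous_sqrt.comp (continuous_const.mul continuous_id)).continuousOn
  -- the set where g ≤ 0
  set S : Set ℝ := Set.Icc 1 r₀ ∩ g ⁻¹' Set.Iic 0 with hS
  have hSclosed : IsClosed S := hgcont.preimage_isClosed_of_isClosed isClosed_Icc isClosed_Iic
  have hScompact : IsCompact S := (isCompact_Icc).of_isClosed_subset hSclosed Set.inter_subset_left
  have h1S : (1:ℝ) ∈ S := by
    constructor
    · exact ⟨le_refl _, hr₀⟩
    · simp only [Set.mem_preimage, Set.mem_Iic, hg, hF]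
      simp [Real.sqrt_nonneg]
  set s := sSup S with hs
  have hsS : s ∈ S := hScompact.sSup_mem ⟨1, h1S⟩
  have hs1 : 1 ≤ s := hsS.1.1
  have hsr₀ : s ≤ r₀ := hsS.1.2
  have hgs : g s ≤ 0 := hsS.2
  have hgr₀ : 0 < g r₀ := by simp only [hg, hF]; linarith
  have hsne : s ≠ r₀ := by
    intro h; rw [h] at hgs; linarith
  have hslt : s < r₀ := lt_of_le_of_ne hsr₀ hsne
  -- on (s, r₀], g > 0
  have hgpos : ∀ x ∈ Set.Ioc s r₀, 0 < g x := by
    intro x hx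
    by_contra hle
    push_neg at hle
    have hxS : x ∈ S := ⟨⟨le_trans hs1 hx.1.le, hx.2⟩, hle⟩
    have : x ≤ s := le_csSup hScompact.bddAbove hxS
    exact absurd this (not_le.mpr hx.1)
  -- hence u ≤ 0 on (s, r₀]
  have hupos : ∀ x ∈ Set.Ioc s r₀, u x ≤ 0 := by
    intro x hx
    have hx1 : (1:ℝ) ≤ x := le_trans hs1 hx.1.le
    have hxpos : (0:ℝ) < x := lt_of_lt_of_le zero_lt_one hx1
    have hgx := hgpos x hx
    have hFx : Real.sqrt (((n : ℝ) - 1) * C * x) < F x := by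
      simp only [hg] at hgx; linarith
    have hprod : 0 ≤ ((n : ℝ) - 1) * C * x :=
      le_of_lt (mul_pos (mul_pos hn1 hC) hxpos)
    have hsq : ((n : ℝ) - 1) * C * x < (F x) ^ 2 := by
      have h0 : 0 ≤ Real.sqrt (((n : ℝ) - 1) * C * x) := Real.sqrt_nonneg _
      have := mul_self_lt_mul_self h0 hFx
      calc ((n : ℝ) - 1) * C * x
          = Real.sqrt (((n : ℝ) - 1) * C * x) * Real.sqrt (((n : ℝ) - 1) * C * x) :=
            (Real.mul_self_sqrt hprod).symm
        _ < F x * F x := this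
        _ = (F x) ^ 2 := (sq (F x)).symm
    have hden : (0:ℝ) < ((n : ℝ) - 1) * x := mul_pos hn1 hxpos
    have hkey := hineq x hx1
    have : C < (1 / (((n : ℝ) - 1) * x)) * (F x) ^ 2 := by
      rw [one_div, inv_mul_eq_div, lt_div_iff₀ hden]
      calc C * (((n : ℝ) - 1) * x) = ((n : ℝ) - 1) * C * x := by ring
        _ < (F x) ^ 2 := hsq
    replace hkey : u x + (1 / (((n : ℝ) - 1) * x)) * (F x) ^ 2 ≤ C := hkey
    linarith
  -- the integral from s to r₀ is ≤ 0
  have hint1 : IntervalIntegrable u MeasureTheory.volume 1 s := by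
    apply ContinuousOn.intervalIntegrable
    apply hu.mono
    rw [Set.uIcc_of_le hs1]
    exact fun x hx => hx.1
  have hint2 : IntervalIntegrable u MeasureTheory.volume s r₀ := by
    apply ContinuousOn.intervalIntegrable
    apply hu.mono
    rw [Set.uIcc_of_le hslt.le]
    exact fun x hx => le_trans hs1 hx.1
  have hsplit : F s + (∫ t in s..r₀, u t) = F r₀ :=
    intervalIntegral.integral_add_adjacent_intervals hint1 hint2
  have hnonpos : (∫ t in s..r₀, u t) ≤ 0 := by
    rw [intervalIntegral.integral_of_le hslt.le]
    apply MeasureTheory.setIntegral_nonpos measurableSet_Ioc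
    exact hupos
  -- conclude
  have hmono : Real.sqrt (((n : ℝ) - 1) * C * s) ≤ Real.sqrt (((n : ℝ) - 1) * C * r₀) := by
    apply Real.sqrt_le_sqrt
    have := mul_pos hn1 hC
    nlinarith
  have : F r₀ ≤ Real.sqrt (((n : ℝ) - 1) * C * s) := by
    simp only [hg] at hgs
    linarith
  simp only [hF] at this hcon ⊢
  linarith
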